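/- Let h : [0,∞) → ℝ be differentiable and α : ℝ → ℝ be a continuous increasing function with α(0) = 0. If h'(t) ≤ α(-h(t)) for all t and h(0) ≤ 0, then h(t) ≤ 0 for all t ≥ 0. -/
import Mathlib


/-- ZCBF invariance with a general class-K-like function `α`. -/
theorem zcbf_invariance_classK
    (h : ℝ → ℝ) (hdiff : Differentiable ℝ h)
    (α : ℝ → ℝ) (hcont : Continuous α) (hmono : StrictMono α) (hα0 : α 0 = 0)
    (hineq : ∀ t, 0 ≤ t → deriv h t ≤ α (-h t))
    (h0 : h 0 ≤ 0) :
    ∀ t, 0 ≤ t → h t ≤ 0 := by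
  intro t0 ht0
  by_contra hpos
  push_neg at hpos
  -- S: times in [0,t0] where h ≤ 0
  set S : Set ℝ := {t | t ∈ Set.Icc (0:ℝ) t0 ∧ h t ≤ 0} with hS
  have hScomp : IsCompact S := by
    apply (isCompact_Icc (a := (0:ℝ)) (b := t0)).of_isClosed_subset
    · exact (isClosed_Icc).inter (isClosed_le hdiff.continuous continuous_const)
    · exact fun x hx => hx.1
  have hSne : S.Nonempty := ⟨0, ⟨le_refl 0, ht0⟩, h0⟩
  set s := sSup S with hs
  have hsmem : s ∈ S := hScomp.sSup_mem hSne
  have hs0 : 0 ≤ s := hsmem.1.1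
  have hst0 : s < t0 := lt_of_le_of_ne hsmem.1.2 (by
    intro heq
    exact absurd hsmem.2 (not_le.2 (heq ▸ hpos)))
  -- on (s, t0], h is positive
  have hposOn : ∀ x, s < x → x ≤ t0 → 0 < h x := by
    intro x hsx hxt0
    by_contra hx
    push_neg at hx
    have hxS : x ∈ S := ⟨⟨le_trans hs0 hsx.le, hxt0⟩, hx⟩
    exact absurd (le_csSup hScomp.bddAbove hxS) (not_le.2 hsx)
  -- h strictly antitone on [s, t0]
  have hanti : StrictAntiOn h (Set.Icc s t0) := by
    apply strictAntiOn_of_deriv_neg (convex_Icc s t0) hdiff.continuous.continuousOn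
    intro x hx
    rw [interior_Icc] at hx
    have hxpos : 0 < h x := hposOn x hx.1 hx.2.le
    have : α (-h x) < α 0 := hmono (by linarith)
    have := hineq x (le_trans hs0 hx.1.le)
    rw [hα0] at *; linarith
  have := hanti (Set.left_mem_Icc.2 hst0.le) (Set.right_mem_Icc.2 hst0.le) hst0
  linarith [hsmem.2]
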